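/- arXiv:2211.06051 — 10 statements merged into one kernel-verified Lean document; each statement's English description precedes it below -/
import Mathlib

section
/- Let n ≥ 1 and let M, N be n×n complex matrices such that Nᴴ·M is a Hermitian matrix (i.e. the generalized eigenvalue problem Mz = λNz is Hermitian). If z ∈ ℂⁿ and λ ∈ ℂ satisfy M·z = λ·(N·z), then (Mᴴ·M)·z = λ²·((Nᴴ·N)·z). In other words, every eigenvector of the Hermitian problem Mz = λNz is an eigenvector of the folded problem Mᴴ M z = μ Nᴴ N z with eigenvalue μ = λ². -/
open Matrix

/-- Every eigenpair `(λ, z)` of a Hermitian generalized eigenvalue problem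
`Mz = λ Nz` (meaning `Nᴴ M` is Hermitian) is an eigenpair of the folded
problem `Mᴴ M z = λ² Nᴴ N z`. -/
theorem folded_spectrum {n : ℕ} (hn : 1 ≤ n) (M N : Matrix (Fin n) (Fin n) ℂ)
    (hHerm : (Nᴴ * M).IsHermitian) (z : Fin n → ℂ) (lam : ℂ)
    (hz : M.mulVec z = lam • N.mulVec z) :
    (Mᴴ * M).mulVec z = lam ^ 2 • (Nᴴ * N).mulVec z := by
  have h1 : Mᴴ * N = Nᴴ * M := by
    have := hHerm.eq
    rwa [conjTranspose_mul, conjTranspose_conjTranspose] at this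
  calc (Mᴴ * M).mulVec z = Mᴴ.mulVec (M.mulVec z) := by rw [mulVec_mulVec]
    _ = lam • (Mᴴ * N).mulVec z := by rw [hz, mulVec_smul, mulVec_mulVec]
    _ = lam • Nᴴ.mulVec (M.mulVec z) := by rw [h1, mulVec_mulVec]
    _ = lam ^ 2 • (Nᴴ * N).mulVec z := by
        rw [hz, mulVec_smul, smul_smul, ← sq, mulVec_mulVec]
end

section
/- Let A, B be Hermitian n×n complex matrices such that the real linear span span_ℝ{A, B} contains a positive definite matrix. Then there exist n×n complex matrices M, N such that Nᴴ·M is Hermitian and span_ℝ{Mᴴ·M, Nᴴ·N} = span_ℝ{A, B}. -/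
open Matrix
open scoped ComplexOrder
open scoped MatrixOrder

private lemma span_pair_smul_add {V : Type*} [AddCommGroup V] [Module ℝ V]
    (C D : V) {ε : ℝ} (hε : ε ≠ 0) :
    Submodule.span ℝ ({C, C + ε • D} : Set V) = Submodule.span ℝ ({C, D} : Set V) := by
  apply le_antisymm
  · rw [Submodule.span_le]
    rintro x (rfl | rfl)
    · exact Submodule.subset_span (Set.mem_insert _ _)
    · exact Submodule.mem_span_pair.mpr ⟨1, ε, by simp⟩
  · rw [Submodule.span_le]
    rintro x (rfl | rfl)
    · exact Submodule.subset_span (Set.mem_insert _ _)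
    · refine Submodule.mem_span_pair.mpr ⟨-ε⁻¹, ε⁻¹, ?_⟩
      simp [smul_add, smul_smul, inv_mul_cancel₀ hε]

private lemma key_lemma {n : ℕ} (C D : Matrix (Fin n) (Fin n) ℂ)
    (hC : C.PosDef) (hD : D.IsHermitian) :
    ∃ M N : Matrix (Fin n) (Fin n) ℂ, (Nᴴ * M).IsHermitian ∧
      Submodule.span ℝ ({Mᴴ * M, Nᴴ * N} : Set (Matrix (Fin n) (Fin n) ℂ)) =
        Submodule.span ℝ ({C, D} : Set (Matrix (Fin n) (Fin n) ℂ)) := by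
  classical
  set R := CFC.sqrt C with hRdef
  have hRH : R.IsHermitian := (CFC.sqrt_nonneg C).posSemidef.1
  have hRR : R * R = C := CFC.sqrt_mul_sqrt_self C hC.posSemidef.nonneg
  have hdet : IsUnit R.det := by
    have h2 : R.det * R.det = C.det := by rw [← det_mul, hRR]
    have : C.det ≠ 0 := ne_of_gt hC.det_pos
    exact isUnit_iff_ne_zero.mpr (fun h => this (by rw [← h2, h, mul_zero]))
  have hRinv : R * R⁻¹ = 1 := mul_nonsing_inv R hdet
  have hRinv' : R⁻¹ * R = 1 := nonsing_inv_mul R hdet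
  have hRinvH : (R⁻¹)ᴴ = R⁻¹ := by rw [conjTranspose_nonsing_inv, hRH.eq]
  set S := R⁻¹ * D * R⁻¹ with hSdef
  have hS : S.IsHermitian := by
    rw [IsHermitian, conjTranspose_mul, conjTranspose_mul, hRinvH, hD.eq, hSdef, mul_assoc]
  set lam := hS.eigenvalues with hlam
  set ε : ℝ := (1 + ∑ i, |lam i|)⁻¹ with hεdef
  have hsum : (0:ℝ) ≤ ∑ i, |lam i| := Finset.sum_nonneg fun i _ => abs_nonneg _
  have hεpos : 0 < ε := inv_pos.mpr (by linarith)
  have hεne : ε ≠ 0 := ne_of_gt hεpos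
  have hbound : ∀ i, 0 ≤ 1 + ε * lam i := by
    intro i
    have h1 : |lam i| ≤ ∑ j, |lam j| :=
      Finset.single_le_sum (fun j _ => abs_nonneg (lam j)) (Finset.mem_univ i)
    have h2 : ε * |lam i| ≤ ε * (∑ j, |lam j|) :=
      mul_le_mul_of_nonneg_left h1 (le_of_lt hεpos)
    have h3 : ε * (∑ j, |lam j|) ≤ 1 := by
      rw [hεdef]
      rw [inv_mul_le_iff₀ (by linarith)]
      linarith
    have h4 : -(ε * lam i) ≤ ε * |lam i| := by
      rw [← mul_neg, ]
      exact mul_le_mul_of_nonneg_left (neg_le_abs _) (le_of_lt hεpos)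
    linarith
  -- 1 + ε • S is positive semidefinite
  set U : Matrix (Fin n) (Fin n) ℂ := (hS.eigenvectorUnitary : Matrix (Fin n) (Fin n) ℂ) with hU
  have hUU : U * star U = 1 := mem_unitaryGroup_iff.mp hS.eigenvectorUnitary.2
  have hspec : S = U * diagonal (RCLike.ofReal ∘ lam) * star U := hS.spectral_theorem
  have hPdecomp : (1 : Matrix (Fin n) (Fin n) ℂ) + ε • S
      = U * diagonal (fun i => ((1 + ε * lam i : ℝ) : ℂ)) * (star U) := by
    have : diagonal (fun i => ((1 + ε * lam i : ℝ) : ℂ))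
        = 1 + ε • diagonal (RCLike.ofReal ∘ lam) := by
      rw [← diagonal_one, ← diagonal_smul, diagonal_add]
      funext i
      simp [Complex.real_smul]
    rw [this, mul_add, add_mul, mul_one, hUU, Matrix.mul_smul, smul_mul_assoc, ← hspec]
  have hP : ((1 : Matrix (Fin n) (Fin n) ℂ) + ε • S).PosSemidef := by
    rw [hPdecomp]
    have : (star U : Matrix (Fin n) (Fin n) ℂ) = Uᴴ := rfl
    rw [this]
    apply PosSemidef.mul_mul_conjTranspose_same
    refine posSemidef_diagonal_iff.mpr fun i => ?_
    exact_mod_cast Complex.zero_le_real.mpr (hbound i)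
  set T := CFC.sqrt ((1 : Matrix (Fin n) (Fin n) ℂ) + ε • S) with hTdef
  have hTH : T.IsHermitian := (CFC.sqrt_nonneg _).posSemidef.1
  have hTT : T * T = 1 + ε • S := CFC.sqrt_mul_sqrt_self _ hP.nonneg
  refine ⟨R, T * R, ?_, ?_⟩
  · show ((T * R)ᴴ * R).IsHermitian
    rw [conjTranspose_mul, hTH.eq, hRH.eq]
    rw [IsHermitian, conjTranspose_mul, conjTranspose_mul, hTH.eq, hRH.eq, mul_assoc]
  · have hMM : Rᴴ * R = C := by rw [hRH.eq, hRR]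
    have hRSR : R * S * R = D := by
      rw [hSdef]
      calc R * (R⁻¹ * D * R⁻¹) * R = (R * R⁻¹) * D * (R⁻¹ * R) := by
            simp only [mul_assoc]
        _ = D := by rw [hRinv, hRinv', one_mul, mul_one]
    have hNN : (T * R)ᴴ * (T * R) = C + ε • D := by
      rw [conjTranspose_mul, hTH.eq, hRH.eq]
      calc R * T * (T * R) = R * (T * T) * R := by simp only [mul_assoc]
        _ = R * (1 + ε • S) * R := by rw [hTT]
        _ = R * R + ε • (R * S * R) := by
            rw [mul_add, add_mul, mul_one, Matrix.mul_smul, smul_mul_assoc]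
        _ = C + ε • D := by rw [hRR, hRSR]
    rw [hMM, hNN]
    exact span_pair_smul_add C D hεne

/-- A two-dimensional real span of Hermitian matrices containing a positive
definite element has a "square root": a Hermitian eigenvalue problem returning
it under folding. -/
theorem span_has_square_root {n : ℕ} (A B : Matrix (Fin n) (Fin n) ℂ)
    (hA : A.IsHermitian) (hB : B.IsHermitian)
    (hpos : ∃ C ∈ Submodule.span ℝ ({A, B} : Set (Matrix (Fin n) (Fin n) ℂ)), C.PosDef) :
    ∃ M N : Matrix (Fin n) (Fin n) ℂ, (Nᴴ * M).IsHermitian ∧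
      Submodule.span ℝ ({Mᴴ * M, Nᴴ * N} : Set (Matrix (Fin n) (Fin n) ℂ)) =
        Submodule.span ℝ ({A, B} : Set (Matrix (Fin n) (Fin n) ℂ)) := by
  obtain ⟨C, hCmem, hCpd⟩ := hpos
  obtain ⟨α, β, hαβ⟩ := Submodule.mem_span_pair.mp hCmem
  have hAmem : A ∈ Submodule.span ℝ ({A, B} : Set (Matrix (Fin n) (Fin n) ℂ)) :=
    Submodule.subset_span (Set.mem_insert _ _)
  have hBmem : B ∈ Submodule.span ℝ ({A, B} : Set (Matrix (Fin n) (Fin n) ℂ)) :=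
    Submodule.subset_span (Set.mem_insert_of_mem _ rfl)
  by_cases hβ : β = 0
  · by_cases hα : α = 0
    · -- C = 0, so n = 0 since C is positive definite
      subst hα; subst hβ
      simp only [zero_smul, add_zero] at hαβ
      rcases Nat.eq_zero_or_pos n with rfl | hn
      · refine ⟨0, 0, by simp [Matrix.IsHermitian], ?_⟩
        apply le_antisymm <;> rw [Submodule.span_le] <;>
          intro x _ <;>
          · have : x = 0 := Subsingleton.elim x 0
            simp [this]
      · exfalso
        have : Nonempty (Fin n) := ⟨⟨0, hn⟩⟩
        have hdet := hCpd.det_pos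
        rw [← hαβ] at hdet
        simp [Matrix.det_zero] at hdet
    · -- C = α • A, use pair (C, B)
      obtain ⟨M, N, hMN, hspan⟩ := key_lemma C B hCpd hB
      refine ⟨M, N, hMN, ?_⟩
      rw [hspan]
      apply le_antisymm <;> rw [Submodule.span_le] <;> rintro x (rfl | rfl)
      · exact hCmem
      · exact hBmem
      · refine Submodule.mem_span_pair.mpr ⟨α⁻¹, 0, ?_⟩
        rw [← hαβ, hβ]
        simp [smul_smul, inv_mul_cancel₀ hα]
      · exact Submodule.subset_span (Set.mem_insert_of_mem _ rfl)
  · -- β ≠ 0, use pair (C, A)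
    obtain ⟨M, N, hMN, hspan⟩ := key_lemma C A hCpd hA
    refine ⟨M, N, hMN, ?_⟩
    rw [hspan]
    apply le_antisymm <;> rw [Submodule.span_le] <;> rintro x (rfl | rfl)
    · exact hCmem
    · exact hAmem
    · exact Submodule.subset_span (Set.mem_insert_of_mem _ rfl)
    · refine Submodule.mem_span_pair.mpr ⟨β⁻¹, -(β⁻¹ * α), ?_⟩
      rw [← hαβ]
      simp only [smul_add, smul_smul, inv_mul_cancel₀ hβ, neg_smul]
      module
end

section
/- Let M, N be n×n complex matrices with N invertible and Nᴴ·M Hermitian. Let σ ⊆ ℂ be the spectrum of the matrix M·N⁻¹. Then for every μ ∈ ℂ and every nonzero z ∈ ℂⁿ, writing rq = ⟪N·z, M·z⟫ / ‖N·z‖², one has dist(μ, σ)² ≤ |rq − μ|² + ‖M·z‖²/‖N·z‖² − |rq|², where dist(μ, σ) is the distance from μ to the set σ. -/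
open Matrix BigOperators

/-- The standard inner product on `ℂⁿ`, conjugate-linear in the first argument. -/
noncomputable def ip {n : ℕ} (x y : Fin n → ℂ) : ℂ :=
  ∑ i, (starRingEnd ℂ) (x i) * y i

/-- The Euclidean norm on `ℂⁿ`. -/
noncomputable def vnorm {n : ℕ} (x : Fin n → ℂ) : ℝ :=
  Real.sqrt (∑ i, ‖x i‖ ^ 2)

lemma ip_eq_inner {n : ℕ} (x y : Fin n → ℂ) :
    ip x y = @inner ℂ (EuclideanSpace ℂ (Fin n)) _
      ((WithLp.equiv 2 _).symm x) ((WithLp.equiv 2 _).symm y) := by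
  simp [ip, PiLp.inner_apply, RCLike.inner_apply, mul_comm]

lemma vnorm_eq_norm {n : ℕ} (x : Fin n → ℂ) :
    vnorm x = ‖(WithLp.equiv 2 (Fin n → ℂ)).symm x‖ := by
  rw [vnorm, EuclideanSpace.norm_eq]
  simp

lemma residual' {n : ℕ} (A : Matrix (Fin n) (Fin n) ℂ) (hA : A.IsHermitian)
    (μ : ℂ) (w : Fin n → ℂ) :
    Metric.infDist μ {lam : ℂ | ∃ v : Fin n → ℂ, v ≠ 0 ∧ A.mulVec v = lam • v} ^ 2
      * ‖(WithLp.equiv 2 (Fin n → ℂ)).symm w‖ ^ 2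
    ≤ ‖(WithLp.equiv 2 (Fin n → ℂ)).symm (A.mulVec w - μ • w)‖ ^ 2 := by
  classical
  set S := {lam : ℂ | ∃ v : Fin n → ℂ, v ≠ 0 ∧ A.mulVec v = lam • v} with hS
  set b := hA.eigenvectorBasis with hb
  set d := Metric.infDist μ S with hd
  set x : EuclideanSpace ℂ (Fin n) := (WithLp.equiv 2 (Fin n → ℂ)).symm w with hx
  have hmem : ∀ i, (hA.eigenvalues i : ℂ) ∈ S := by
    intro i
    refine ⟨⇑(b i), ?_, ?_⟩
    · intro h
      have h0 : b i ≠ 0 := b.toBasis.ne_zero i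
      exact h0 ((WithLp.equiv 2 (Fin n → ℂ)).injective h)
    · rw [hA.mulVec_eigenvectorBasis]
      funext j
      simp [Complex.real_smul, ← hb]
  have hsym := (Matrix.isHermitian_iff_isSymmetric.mp hA)
  have key : ∀ (i : Fin n) (y : EuclideanSpace ℂ (Fin n)),
      b.repr (Matrix.toEuclideanLin A y) i = (hA.eigenvalues i : ℂ) * b.repr y i := by
    intro i y
    rw [b.repr_apply_apply, b.repr_apply_apply, ← hsym (b i) y]
    have hbi : Matrix.toEuclideanLin A (b i) = (hA.eigenvalues i : ℂ) • b i := by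
      apply (WithLp.equiv 2 (Fin n → ℂ)).injective
      change WithLp.ofLp (Matrix.toEuclideanLin A (b i)) = _
      rw [Matrix.piLp_ofLp_toEuclideanLin]
      show A.mulVec _ = _
      rw [hA.mulVec_eigenvectorBasis]
      funext j
      simp [Complex.real_smul, ← hb]
    rw [hbi, inner_smul_left]
    simp
  have hnorm : ∀ y : EuclideanSpace ℂ (Fin n), ‖y‖ ^ 2 = ∑ i, ‖b.repr y i‖ ^ 2 := by
    intro y
    rw [← b.repr.norm_map y, EuclideanSpace.norm_eq, Real.sq_sqrt (by positivity)]
  have hTx : Matrix.toEuclideanLin A x - μ • x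
      = (WithLp.equiv 2 (Fin n → ℂ)).symm (A.mulVec w - μ • w) := by
    apply (WithLp.equiv 2 (Fin n → ℂ)).injective
    simp [x]
  rw [← hTx, hnorm, hnorm]
  rw [Finset.mul_sum]
  apply Finset.sum_le_sum
  intro i _
  have hrepr : b.repr (Matrix.toEuclideanLin A x - μ • x) i
      = ((hA.eigenvalues i : ℂ) - μ) * b.repr x i := by
    rw [map_sub, _root_.map_smul]
    simp only [PiLp.sub_apply, PiLp.smul_apply, key, smul_eq_mul]
    ring
  rw [hrepr, norm_mul, mul_pow]
  apply mul_le_mul_of_nonneg_right _ (by positivity)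
  have hdle : d ≤ ‖(hA.eigenvalues i : ℂ) - μ‖ := by
    have := Metric.infDist_le_dist_of_mem (x := μ) (hmem i)
    rwa [dist_eq_norm, ← norm_neg, neg_sub] at this
  have hd0 : 0 ≤ d := Metric.infDist_nonneg
  exact pow_le_pow_left₀ hd0 hdle 2

/-- Intertwining of Rayleigh quotients and optimal quotients in eigenvalue
estimation for a Hermitian problem `Mz = λNz` with `N` invertible:
`dist(μ, σ(MN⁻¹))² ≤ |rq − μ|² + ‖Mz‖²/‖Nz‖² − |rq|²`. -/
theorem dist_sq_le_quotients {n : ℕ} (M N : Matrix (Fin n) (Fin n) ℂ)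
    (hN : IsUnit N.det) (hHerm : (Nᴴ * M).IsHermitian)
    (μ : ℂ) (z : Fin n → ℂ) (hz : z ≠ 0) :
    Metric.infDist μ
        {lam : ℂ | ∃ v : Fin n → ℂ, v ≠ 0 ∧ (M * N⁻¹).mulVec v = lam • v} ^ 2 ≤
      ‖ip (N.mulVec z) (M.mulVec z) / ((vnorm (N.mulVec z) : ℂ) ^ 2) - μ‖ ^ 2
        + vnorm (M.mulVec z) ^ 2 / vnorm (N.mulVec z) ^ 2
        - ‖ip (N.mulVec z) (M.mulVec z) / ((vnorm (N.mulVec z) : ℂ) ^ 2)‖ ^ 2 := by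
  classical
  -- Hermitian-ness of A = M * N⁻¹
  have hNH : IsUnit (Nᴴ).det := by
    rw [Matrix.det_conjTranspose]; exact hN.star
  have hMN : Mᴴ * N = Nᴴ * M := by
    have := hHerm.eq
    rwa [Matrix.conjTranspose_mul, Matrix.conjTranspose_conjTranspose] at this
  have hA : (M * N⁻¹).IsHermitian := by
    show (M * N⁻¹)ᴴ = M * N⁻¹
    rw [Matrix.conjTranspose_mul, Matrix.conjTranspose_nonsing_inv]
    calc Nᴴ⁻¹ * Mᴴ = Nᴴ⁻¹ * (Mᴴ * N * N⁻¹) := by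
          rw [Matrix.mul_nonsing_inv_cancel_right _ _ hN]
      _ = Nᴴ⁻¹ * (Nᴴ * (M * N⁻¹)) := by rw [hMN, Matrix.mul_assoc]
      _ = M * N⁻¹ := by rw [Matrix.nonsing_inv_mul_cancel_left _ _ hNH]
  set w : Fin n → ℂ := N.mulVec z with hw
  set u : Fin n → ℂ := M.mulVec z with hu
  have hAw : (M * N⁻¹).mulVec w = u := by
    rw [hw, Matrix.mulVec_mulVec, Matrix.nonsing_inv_mul_cancel_right _ _ hN]
  have hw0 : w ≠ 0 := by
    intro h
    apply hz
    have : N⁻¹.mulVec w = z := by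
      rw [hw, Matrix.mulVec_mulVec, Matrix.nonsing_inv_mul _ hN, Matrix.one_mulVec]
    rw [← this, h, Matrix.mulVec_zero]
  set xw : EuclideanSpace ℂ (Fin n) := (WithLp.equiv 2 (Fin n → ℂ)).symm w with hxw
  set xu : EuclideanSpace ℂ (Fin n) := (WithLp.equiv 2 (Fin n → ℂ)).symm u with hxu
  have hxw0 : xw ≠ 0 := fun h => hw0 ((WithLp.equiv 2 (Fin n → ℂ)).symm.injective (h.trans rfl))
  have ht : (0:ℝ) < ‖xw‖ := norm_pos_iff.mpr hxw0
  set c : ℂ := ip w u with hc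
  have hcin : c = @inner ℂ (EuclideanSpace ℂ (Fin n)) _ xw xu := ip_eq_inner w u
  -- the residual bound
  have hres := residual' (M * N⁻¹) hA μ w
  rw [hAw] at hres
  have hnormdiff : ‖(WithLp.equiv 2 (Fin n → ℂ)).symm (u - μ • w)‖ ^ 2
      = ‖xu - μ • xw‖ ^ 2 := by rfl
  rw [hnormdiff] at hres
  have hsub : ‖xu - μ • xw‖ ^ 2
      = ‖xu‖ ^ 2 - 2 * Complex.re (μ * (starRingEnd ℂ) c) + ‖μ‖ ^ 2 * ‖xw‖ ^ 2 := by
    rw [@norm_sub_sq ℂ]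
    have h1 : @inner ℂ (EuclideanSpace ℂ (Fin n)) _ xu (μ • xw) = μ * (starRingEnd ℂ) c := by
      rw [inner_smul_right, ← inner_conj_symm, hcin]
    rw [h1, norm_smul]
    simp only [RCLike.re_to_complex, mul_pow]
  -- rewrite the goal norms
  rw [vnorm_eq_norm, vnorm_eq_norm, ← hxw, ← hxu]
  have ht2 : (‖xw‖:ℝ)^2 ≠ 0 := by positivity
  have halg : ‖c / ((‖xw‖:ℝ):ℂ)^2 - μ‖ ^ 2 + ‖xu‖^2 / ‖xw‖^2
      - ‖c / ((‖xw‖:ℝ):ℂ)^2‖ ^ 2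
      = (‖xu‖ ^ 2 - 2 * Complex.re (μ * (starRingEnd ℂ) c) + ‖μ‖ ^ 2 * ‖xw‖ ^ 2) / ‖xw‖^2 := by
    rw [show ((‖xw‖:ℝ):ℂ)^2 = ((‖xw‖^2:ℝ):ℂ) by push_cast; ring]
    rw [Complex.sq_norm, Complex.sq_norm, Complex.sq_norm]
    simp only [Complex.normSq_apply, Complex.sub_re, Complex.sub_im, Complex.div_re,
      Complex.div_im, Complex.mul_re, Complex.mul_im, Complex.conj_re, Complex.conj_im,
      Complex.normSq_ofReal, Complex.ofReal_re, Complex.ofReal_im]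
    field_simp
    ring
  rw [halg, ← hsub, le_div_iff₀ (by positivity)]
  exact hres
end

section
/- Let A, B : ℂⁿ → ℂⁿ be continuous maps such that A and B do not vanish simultaneously at any nonzero z, i.e. there is no z ≠ 0 with A(z) = 0 and B(z) = 0. Then the set S = { λ ∈ ℂ : there exists z ∈ ℂⁿ with ‖z‖ = 1 and A(z) = λ·B(z) } is a closed subset of ℂ. -/
/-- For a homogeneous eigenvalue problem `A(z) = λ B(z)` with continuous `A`, `B`
not vanishing simultaneously at nonzero points, the set of eigenvalues (with
eigenvectors on the unit sphere) is closed. -/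
theorem spectrum_isClosed {n : ℕ}
    (A B : EuclideanSpace ℂ (Fin n) → EuclideanSpace ℂ (Fin n))
    (hA : Continuous A) (hB : Continuous B)
    (h : ∀ z : EuclideanSpace ℂ (Fin n), z ≠ 0 → ¬(A z = 0 ∧ B z = 0)) :
    IsClosed {lam : ℂ | ∃ z : EuclideanSpace ℂ (Fin n), ‖z‖ = 1 ∧ A z = lam • B z} := by
  have hset : {lam : ℂ | ∃ z : EuclideanSpace ℂ (Fin n), ‖z‖ = 1 ∧ A z = lam • B z}
      = Prod.fst '' {p : ℂ × Metric.sphere (0 : EuclideanSpace ℂ (Fin n)) 1 |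
          A (p.2 : EuclideanSpace ℂ (Fin n)) = p.1 • B (p.2 : EuclideanSpace ℂ (Fin n))} := by
    ext lam
    constructor
    · rintro ⟨z, hz, hAz⟩
      exact ⟨(lam, ⟨z, by simp [hz]⟩), hAz, rfl⟩
    · rintro ⟨⟨l, z, hz⟩, hAz, rfl⟩
      refine ⟨z, ?_, hAz⟩
      simpa [Metric.mem_sphere, dist_eq_norm] using hz
  rw [hset]
  apply isClosedMap_fst_of_compactSpace
  have hcont : Continuous fun p : ℂ × Metric.sphere (0 : EuclideanSpace ℂ (Fin n)) 1 =>
      A (p.2 : EuclideanSpace ℂ (Fin n)) - p.1 • B (p.2 : EuclideanSpace ℂ (Fin n)) :=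
    (hA.comp (continuous_subtype_val.comp continuous_snd)).sub
      (continuous_fst.smul (hB.comp (continuous_subtype_val.comp continuous_snd)))
  have : {p : ℂ × Metric.sphere (0 : EuclideanSpace ℂ (Fin n)) 1 |
      A (p.2 : EuclideanSpace ℂ (Fin n)) = p.1 • B (p.2 : EuclideanSpace ℂ (Fin n))}
      = (fun p : ℂ × Metric.sphere (0 : EuclideanSpace ℂ (Fin n)) 1 =>
          A (p.2 : EuclideanSpace ℂ (Fin n)) - p.1 • B (p.2 : EuclideanSpace ℂ (Fin n))) ⁻¹' {0} := by
    ext p; simp [sub_eq_zero]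
  rw [this]
  exact isClosed_singleton.preimage hcont
end

section
/- Let A, B : ℂⁿ → ℂⁿ be continuous maps such that B(z) ≠ 0 for every z ≠ 0. Then the set S = { λ ∈ ℂ : there exists z ∈ ℂⁿ with ‖z‖ = 1 and A(z) = λ·B(z) } is a compact subset of ℂ. -/
/-- For a homogeneous eigenvalue problem `A(z) = λ B(z)` with continuous `A`, `B`
and `B` not vanishing at nonzero points, the set of eigenvalues (with
eigenvectors on the unit sphere) is compact. -/
theorem spectrum_isCompact {n : ℕ}
    (A B : EuclideanSpace ℂ (Fin n) → EuclideanSpace ℂ (Fin n))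
    (hA : Continuous A) (hB : Continuous B)
    (h : ∀ z : EuclideanSpace ℂ (Fin n), z ≠ 0 → B z ≠ 0) :
    IsCompact {lam : ℂ | ∃ z : EuclideanSpace ℂ (Fin n), ‖z‖ = 1 ∧ A z = lam • B z} := by
  classical
  set T : Set (EuclideanSpace ℂ (Fin n)) :=
    {z | ‖z‖ = 1 ∧ ((‖B z‖ : ℂ) ^ 2) • A z = (inner ℂ (B z) (A z) : ℂ) • B z} with hT
  have hBne : ∀ z ∈ T, B z ≠ 0 := by
    intro z hz
    obtain ⟨hz1, -⟩ := hz
    exact h z (by rintro rfl; simp at hz1)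
  have hcont1 : Continuous fun z => ((‖B z‖ : ℂ) ^ 2) • A z :=
    ((Complex.continuous_ofReal.comp hB.norm).pow 2).smul hA
  have hcont2 : Continuous fun z => (inner ℂ (B z) (A z) : ℂ) • B z :=
    (hB.inner (𝕜 := ℂ) hA).smul hB
  have hTcompact : IsCompact T := by
    have hTeq : T = Metric.sphere (0 : EuclideanSpace ℂ (Fin n)) 1 ∩
        {z | ((‖B z‖ : ℂ) ^ 2) • A z = (inner ℂ (B z) (A z) : ℂ) • B z} := by
      ext z
      simp [hT, Metric.mem_sphere, dist_zero_right]
    rw [hTeq]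
    exact (isCompact_sphere 0 1).inter_right (isClosed_eq hcont1 hcont2)
  have hSeq : {lam : ℂ | ∃ z : EuclideanSpace ℂ (Fin n), ‖z‖ = 1 ∧ A z = lam • B z}
      = (fun z => (inner ℂ (B z) (A z) : ℂ) / ((‖B z‖ : ℂ) ^ 2)) '' T := by
    ext lam
    constructor
    · rintro ⟨z, hz1, hz2⟩
      have hBz : B z ≠ 0 := h z (by rintro rfl; simp at hz1)
      have hnorm : ((‖B z‖ : ℂ) ^ 2) ≠ 0 := by
        simp [norm_eq_zero, hBz]
      refine ⟨z, ⟨hz1, ?_⟩, ?_⟩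
      · rw [hz2, inner_smul_right, smul_smul]
        congr 1
        rw [inner_self_eq_norm_sq_to_K (𝕜 := ℂ)]
        exact mul_comm _ _
      · show (inner ℂ (B z) (A z) : ℂ) / ((‖B z‖ : ℂ) ^ 2) = lam
        have hi : (inner ℂ (B z) (A z) : ℂ) = lam * (‖B z‖ : ℂ) ^ 2 := by
          rw [hz2, inner_smul_right, inner_self_eq_norm_sq_to_K (𝕜 := ℂ)]
          rfl
        rw [hi, mul_div_assoc, div_self hnorm, mul_one]
        
    · rintro ⟨z, ⟨hz1, hz2⟩, rfl⟩
      have hBz : B z ≠ 0 := h z (by rintro rfl; simp at hz1)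
      have hnorm : ((‖B z‖ : ℂ) ^ 2) ≠ 0 := by
        simp [norm_eq_zero, hBz]
      refine ⟨z, hz1, ?_⟩
      have := congrArg (fun v => (((‖B z‖ : ℂ) ^ 2)⁻¹) • v) hz2
      simp only [smul_smul, inv_mul_cancel₀ hnorm, one_smul] at this
      rw [this]
      congr 1
      show (((‖B z‖ : ℂ) ^ 2)⁻¹) * (inner ℂ (B z) (A z) : ℂ)
          = (inner ℂ (B z) (A z) : ℂ) / ((‖B z‖ : ℂ) ^ 2)
      rw [div_eq_mul_inv, mul_comm]
  rw [hSeq]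
  apply hTcompact.image_of_continuousOn
  apply ContinuousOn.div (hB.inner (𝕜 := ℂ) hA).continuousOn
    ((Complex.continuous_ofReal.comp hB.norm).pow 2).continuousOn
  intro z hz
  simp [norm_eq_zero, hBne z hz]
end

section
/- Let n ≥ 1, let k > 0 be real, and let f, g : ℂⁿ → ℝ be differentiable (as functions of the underlying real variables) with f(0) = 0, g(0) = 0, and f(r·z) = r^{k+1}·f(z), g(r·z) = r^{k+1}·g(z) for all real r > 0 and all z ∈ ℂⁿ. Suppose g(z) ≠ 0 for all z ≠ 0. Let A, B : ℂⁿ → ℂⁿ be the conjugate co-gradients of f and g respectively, i.e. for all z, v ∈ ℂⁿ the real Fréchet derivatives satisfy Df(z)[v] = 2·Re⟪v, A(z)⟫ and Dg(z)[v] = 2·Re⟪v, B(z)⟫. Then the spectrum of the gradient eigenvalue problem A(z) = λB(z) is nonempty: there exist z ≠ 0 and a real λ with A(z) = λ·B(z). -/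
/-- A homogeneous gradient eigenvalue problem with nonvanishing denominator has
nonempty (real) spectrum. Here `A`, `B` are the conjugate co-gradients of the
real-valued functions `f`, `g`, both positively homogeneous of degree `k + 1`. -/
theorem gradient_spectrum_nonempty {n : ℕ} (hn : 1 ≤ n) (k : ℝ) (hk : 0 < k)
    (f g : EuclideanSpace ℂ (Fin n) → ℝ)
    (hf : Differentiable ℝ f) (hg : Differentiable ℝ g)
    (hf0 : f 0 = 0) (hg0 : g 0 = 0)
    (hfhom : ∀ r : ℝ, 0 < r → ∀ z, f (r • z) = r ^ (k + 1) * f z)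
    (hghom : ∀ r : ℝ, 0 < r → ∀ z, g (r • z) = r ^ (k + 1) * g z)
    (hgne : ∀ z : EuclideanSpace ℂ (Fin n), z ≠ 0 → g z ≠ 0)
    (A B : EuclideanSpace ℂ (Fin n) → EuclideanSpace ℂ (Fin n))
    (hAgrad : ∀ z v : EuclideanSpace ℂ (Fin n),
      fderiv ℝ f z v = 2 * (inner ℂ v (A z) : ℂ).re)
    (hBgrad : ∀ z v : EuclideanSpace ℂ (Fin n),
      fderiv ℝ g z v = 2 * (inner ℂ v (B z) : ℂ).re) :
    ∃ z : EuclideanSpace ℂ (Fin n), z ≠ 0 ∧ ∃ lam : ℝ, A z = (lam : ℂ) • B z := by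
  -- The sphere is nonempty, compact, and connected.
  have hrank : (1 : Cardinal) < Module.rank ℝ (EuclideanSpace ℂ (Fin n)) := by
    have h1 : (Module.finrank ℝ (EuclideanSpace ℂ (Fin n)) : Cardinal)
        = Module.rank ℝ (EuclideanSpace ℂ (Fin n)) := Module.finrank_eq_rank ℝ _
    have h2 : Module.finrank ℝ (EuclideanSpace ℂ (Fin n)) = 2 * n := by
      have h := Module.finrank_mul_finrank ℝ ℂ (EuclideanSpace ℂ (Fin n))
      rw [finrank_euclideanSpace, Fintype.card_fin, Complex.finrank_real_complex] at h
      omega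
    rw [← h1, h2]
    exact_mod_cast by omega
  have hS : ∀ z ∈ Metric.sphere (0 : EuclideanSpace ℂ (Fin n)) 1, z ≠ 0 := by
    intro z hz
    have : ‖z‖ = 1 := by simpa using hz
    intro h0; rw [h0] at this; simp at this
  have hconn : IsConnected (Metric.sphere (0 : EuclideanSpace ℂ (Fin n)) 1) :=
    isConnected_sphere hrank 0 zero_le_one
  have hcpt : IsCompact (Metric.sphere (0 : EuclideanSpace ℂ (Fin n)) 1) :=
    isCompact_sphere 0 1
  haveI : Nonempty (Fin n) := ⟨⟨0, hn⟩⟩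
  have hne : (Metric.sphere (0 : EuclideanSpace ℂ (Fin n)) 1).Nonempty :=
    NormedSpace.sphere_nonempty.mpr zero_le_one
  -- g has constant sign on the sphere.
  have hsign : (∀ z ∈ Metric.sphere (0 : EuclideanSpace ℂ (Fin n)) 1, 0 < g z) ∨
      (∀ z ∈ Metric.sphere (0 : EuclideanSpace ℂ (Fin n)) 1, g z < 0) := by
    by_contra h
    push_neg at h
    obtain ⟨⟨z₁, hz₁, hz₁'⟩, ⟨z₂, hz₂, hz₂'⟩⟩ := h
    have hg1 : g z₁ < 0 := lt_of_le_of_ne hz₁' (hgne z₁ (hS z₁ hz₁))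
    have hg2 : 0 < g z₂ := lt_of_le_of_ne hz₂' (Ne.symm (hgne z₂ (hS z₂ hz₂)))
    have himg : IsConnected (g '' Metric.sphere (0 : EuclideanSpace ℂ (Fin n)) 1) :=
      hconn.image g hg.continuous.continuousOn
    have hoc := himg.isPreconnected.ordConnected
    have h0 : (0 : ℝ) ∈ g '' Metric.sphere (0 : EuclideanSpace ℂ (Fin n)) 1 :=
      hoc.out ⟨z₁, hz₁, rfl⟩ ⟨z₂, hz₂, rfl⟩ ⟨le_of_lt hg1, le_of_lt hg2⟩
    obtain ⟨z, hz, hz0⟩ := h0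
    exact hgne z (hS z hz) hz0
  -- continuity of the quotient
  have hq : ContinuousOn (fun z => f z / g z) (Metric.sphere (0 : EuclideanSpace ℂ (Fin n)) 1) :=
    (hf.continuous.continuousOn).div (hg.continuous.continuousOn)
      (fun z hz => hgne z (hS z hz))
  -- find z₀ on the sphere with f z - lam * g z ≤ 0 on the sphere, lam = f z₀ / g z₀
  obtain ⟨z₀, hz₀, hle⟩ : ∃ z₀ ∈ Metric.sphere (0 : EuclideanSpace ℂ (Fin n)) 1,
      ∀ z ∈ Metric.sphere (0 : EuclideanSpace ℂ (Fin n)) 1,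
        f z - (f z₀ / g z₀) * g z ≤ 0 := by
    rcases hsign with hpos | hneg
    · obtain ⟨z₀, hz₀, hmax⟩ := hcpt.exists_isMaxOn hne hq
      refine ⟨z₀, hz₀, fun z hz => ?_⟩
      have h1 : f z / g z ≤ f z₀ / g z₀ := hmax hz
      have h2 : 0 < g z := hpos z hz
      have h3 : f z / g z * g z = f z := div_mul_cancel₀ _ (ne_of_gt h2)
      nlinarith [mul_le_mul_of_nonneg_right h1 (le_of_lt h2)]
    · obtain ⟨z₀, hz₀, hmin⟩ := hcpt.exists_isMinOn hne hq
      refine ⟨z₀, hz₀, fun z hz => ?_⟩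
      have h1 : f z₀ / g z₀ ≤ f z / g z := hmin hz
      have h2 : g z < 0 := hneg z hz
      have h3 : f z / g z * g z = f z := div_mul_cancel₀ _ (ne_of_lt h2)
      nlinarith [mul_le_mul_of_nonpos_right h1 (le_of_lt h2)]
  set lam : ℝ := f z₀ / g z₀ with hlam
  set F : EuclideanSpace ℂ (Fin n) → ℝ := fun z => f z - lam * g z with hF
  have hz₀ne : z₀ ≠ 0 := hS z₀ hz₀
  have hFz₀ : F z₀ = 0 := by
    simp only [hF, hlam]
    rw [div_mul_cancel₀ _ (hgne z₀ hz₀ne)]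
    ring
  -- F ≤ 0 everywhere
  have hFle : ∀ z, F z ≤ 0 := by
    intro z
    rcases eq_or_ne z 0 with rfl | hz
    · simp [hF, hf0, hg0]
    · have hr : (0 : ℝ) < ‖z‖ := norm_pos_iff.mpr hz
      set u : EuclideanSpace ℂ (Fin n) := ‖z‖⁻¹ • z with hu
      have hunorm : u ∈ Metric.sphere (0 : EuclideanSpace ℂ (Fin n)) 1 := by
        simp only [mem_sphere_iff_norm, sub_zero, hu, norm_smul, norm_inv, norm_norm]
        field_simp
      have hzu : z = ‖z‖ • u := by
        rw [hu, smul_smul, mul_inv_cancel₀ (ne_of_gt hr), one_smul]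
      have hfz : f z = ‖z‖ ^ (k + 1) * f u := by
        conv_lhs => rw [hzu]
        exact hfhom _ hr u
      have hgz : g z = ‖z‖ ^ (k + 1) * g u := by
        conv_lhs => rw [hzu]
        exact hghom _ hr u
      have : F z = ‖z‖ ^ (k + 1) * F u := by
        simp only [hF]
        rw [hfz, hgz]
        ring
      rw [this]
      have hpow : (0 : ℝ) < ‖z‖ ^ (k + 1) := Real.rpow_pos_of_pos hr _
      exact mul_nonpos_of_nonneg_of_nonpos (le_of_lt hpow) (hle u hunorm)
  -- z₀ is a local max of F, so fderiv F z₀ = 0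
  have hmax : IsLocalMax F z₀ := by
    apply Filter.Eventually.of_forall
    intro z
    rw [hFz₀]
    exact hFle z
  have hF0 : fderiv ℝ F z₀ = 0 := hmax.fderiv_eq_zero
  -- compute fderiv F
  have hFderiv : ∀ v, fderiv ℝ F z₀ v = fderiv ℝ f z₀ v - lam * fderiv ℝ g z₀ v := by
    intro v
    have hdf : DifferentiableAt ℝ f z₀ := hf z₀
    have hdg : DifferentiableAt ℝ g z₀ := hg z₀
    have h2 : fderiv ℝ (fun z => lam * g z) z₀ = lam • fderiv ℝ g z₀ :=
      fderiv_const_mul hdg lam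
    have h3 := fderiv_fun_sub (𝕜 := ℝ) hdf (hdg.const_mul lam)
    have h1 : fderiv ℝ F z₀ = fderiv ℝ f z₀ - lam • fderiv ℝ g z₀ := by
      simp only [hF]
      rw [h3, h2]
    rw [h1]
    simp
  -- conclude A z₀ = lam • B z₀
  refine ⟨z₀, hz₀ne, lam, ?_⟩
  set w : EuclideanSpace ℂ (Fin n) := A z₀ - (lam : ℂ) • B z₀ with hw
  have hkey : ∀ v, (inner ℂ v w : ℂ).re = 0 := by
    intro v
    have h0 : fderiv ℝ F z₀ v = 0 := by rw [hF0]; rfl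
    rw [hFderiv v, hAgrad, hBgrad] at h0
    have : (inner ℂ v w : ℂ).re = (inner ℂ v (A z₀) : ℂ).re - lam * (inner ℂ v (B z₀) : ℂ).re := by
      rw [hw, inner_sub_right, inner_smul_right]
      simp [Complex.mul_re]
    rw [this]
    linarith
  have hw0 : w = 0 := by
    have h1 := hkey w
    rw [inner_self_eq_norm_sq_to_K w] at h1
    norm_cast at h1
    have h2 : ‖w‖ ^ 2 = 0 := h1
    have : ‖w‖ = 0 := by nlinarith [norm_nonneg w]
    exact norm_eq_zero.mp this
  have := sub_eq_zero.mp (hw ▸ hw0)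
  exact this
end

section
/- Let l > 0 be real, let g : ℂⁿ → ℝ be differentiable (over the real scalars) with g(0) = 0 and g(z) ≠ 0 for all z ≠ 0, and let B : ℂⁿ → ℂⁿ satisfy Dg(z)[v] = 2·Re⟪v, B(z)⟫ for all z, v, with B(r·z) = r^l·B(z) for all real r > 0. Let A : ℂⁿ → ℂⁿ be any map such that ⟪z, A(z)⟫ ∈ ℝ and ⟪z, B(z)⟫ ∈ ℝ for every z ∈ ℂⁿ. Then every eigenvalue of the problem A(z) = λB(z) is real: if z ≠ 0 and λ ∈ ℂ satisfy A(z) = λ·B(z), then ⟪z, B(z)⟫ ≠ 0, λ ∈ ℝ, and λ = ⟪z, A(z)⟫ / ⟪z, B(z)⟫. -/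
/-- Nonlinear Hermitianity: if `B` is the conjugate co-gradient of a
homogeneous `g` that does not vanish away from `0`, and `⟪z, A z⟫`, `⟪z, B z⟫`
are real for all `z`, then every eigenvalue of `A(z) = λ B(z)` is real and
equals `⟪z, A z⟫ / ⟪z, B z⟫` at its eigenvector. -/
theorem eigenvalues_real {n : ℕ} (l : ℝ) (hl : 0 < l)
    (g : EuclideanSpace ℂ (Fin n) → ℝ)
    (hg : Differentiable ℝ g) (hg0 : g 0 = 0)
    (hgne : ∀ z : EuclideanSpace ℂ (Fin n), z ≠ 0 → g z ≠ 0)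
    (B : EuclideanSpace ℂ (Fin n) → EuclideanSpace ℂ (Fin n))
    (hBgrad : ∀ z v : EuclideanSpace ℂ (Fin n),
      fderiv ℝ g z v = 2 * (inner ℂ v (B z) : ℂ).re)
    (hBhom : ∀ r : ℝ, 0 < r → ∀ z : EuclideanSpace ℂ (Fin n),
      B (r • z) = (r ^ l : ℝ) • B z)
    (A : EuclideanSpace ℂ (Fin n) → EuclideanSpace ℂ (Fin n))
    (hAreal : ∀ z : EuclideanSpace ℂ (Fin n), (inner ℂ z (A z) : ℂ).im = 0)
    (hBreal : ∀ z : EuclideanSpace ℂ (Fin n), (inner ℂ z (B z) : ℂ).im = 0) :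
    ∀ z : EuclideanSpace ℂ (Fin n), z ≠ 0 → ∀ lam : ℂ, A z = lam • B z →
      (inner ℂ z (B z) : ℂ) ≠ 0 ∧ lam.im = 0 ∧
        lam = (inner ℂ z (A z) : ℂ) / (inner ℂ z (B z) : ℂ) := by
  intro z hz lam hA
  -- B 0 = 0
  have hB0 : B 0 = 0 := by
    have h2 := hBhom 2 (by norm_num) 0
    rw [smul_zero] at h2
    have h2l : (1 : ℝ) < (2 : ℝ) ^ l := Real.one_lt_rpow_iff_of_pos (by norm_num) |>.2 (Or.inl ⟨by norm_num, hl⟩)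
    have : ((2 : ℝ) ^ l - 1) • B 0 = 0 := by
      rw [sub_smul, one_smul, ← h2, sub_self]
    rcases smul_eq_zero.1 this with h | h
    · exact absurd h (by linarith)
    · exact h
  have key : (inner ℂ z (B z) : ℂ) ≠ 0 := by
    intro h0
    set φ : ℝ → ℝ := fun r => g (r • z) with hφ
    have hder : ∀ r ∈ Set.Ico (0:ℝ) 1, HasDerivWithinAt φ 0 (Set.Ici r) r := by
      intro r hr
      have h1 : HasDerivAt (fun r : ℝ => r • z) z r := by
        simpa using (hasDerivAt_id r).smul_const z
      have h2 := ((hg (r • z)).hasFDerivAt).comp_hasDerivAt r h1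
      have hzero : fderiv ℝ g (r • z) z = 0 := by
        rcases eq_or_lt_of_le hr.1 with h | h
        · rw [hBgrad, ← h, zero_smul, hB0]
          simp
        · rw [hBgrad, hBhom r h z]
          have : (inner ℂ z ((r ^ l : ℝ) • B z) : ℂ) = ((r ^ l : ℝ) : ℂ) * inner ℂ z (B z) := by
            rw [← algebraMap_smul ℂ (r ^ l : ℝ) (B z), inner_smul_right]
            norm_num [Complex.coe_algebraMap]
          rw [this, h0, mul_zero]
          simp
      rw [hzero] at h2
      exact h2.hasDerivWithinAt
    have hcont : ContinuousOn φ (Set.Icc (0:ℝ) 1) :=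
      (hg.continuous.comp (continuous_id.smul continuous_const)).continuousOn
    have h1 := constant_of_has_deriv_right_zero hcont hder 1 (by norm_num)
    have : φ 1 = 0 := by
      rw [h1]
      simp [hφ, hg0]
    exact hgne z hz (by simpa [hφ] using this)
  have hinner : (inner ℂ z (A z) : ℂ) = lam * (inner ℂ z (B z) : ℂ) := by
    rw [hA, inner_smul_right]
  have him : lam.im = 0 := by
    have := hAreal z
    rw [hinner, Complex.mul_im, hBreal z, mul_zero, zero_add] at this
    rcases mul_eq_zero.1 this with h | h
    · exact h
    · exact absurd (Complex.ext h (hBreal z)) key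
  refine ⟨key, him, ?_⟩
  rw [hinner, mul_div_assoc, div_self key, mul_one]
end

section
/- Let M be an n×n complex matrix and let p be real with 1 < p. Define A(z) ∈ ℂⁿ by A(z) = Mᴴ·w where wᵢ = |(M·z)ᵢ|^{p−2}·(M·z)ᵢ, and B(z) ∈ ℂⁿ by B(z)ᵢ = |zᵢ|^{p−2}·zᵢ (with the convention 0^{p−2}·0 = 0). If z ≠ 0 and λ ∈ ℂ satisfy A(z) = λ·B(z), then λ is real, nonnegative, and λ = (Σᵢ |(M·z)ᵢ|^p) / (Σᵢ |zᵢ|^p), i.e. every eigenvalue of the matrix p-Laplacian eigenvalue problem Mᴴ(|Mz|^{p−2}∘Mz) = λ|z|^{p−2}∘z equals the p-norm quotient ‖Mz‖_p^p / ‖z‖_p^p at its eigenvector. -/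
open Matrix BigOperators

/-- `phi p v = |v|^(p-2) · v`, with the convention `0^(p-2) · 0 = 0`. -/
noncomputable def phi (p : ℝ) (v : ℂ) : ℂ :=
  ((‖v‖ ^ (p - 2) : ℝ) : ℂ) * v

lemma conj_mul_phi (p : ℝ) (hp : 1 < p) (v : ℂ) :
    (starRingEnd ℂ) v * phi p v = ((‖v‖ ^ p : ℝ) : ℂ) := by
  unfold phi
  rcases eq_or_ne v 0 with h | h
  · simp [h, Real.zero_rpow (show p ≠ 0 by linarith)]
  · have hv : (0:ℝ) < ‖v‖ := norm_pos_iff.mpr h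
    have h1 : (starRingEnd ℂ) v * v = ((‖v‖ ^ (2:ℝ) : ℝ) : ℂ) := by
      rw [mul_comm, Complex.mul_conj]
      rw [Real.rpow_two, Complex.sq_norm]
    calc (starRingEnd ℂ) v * (((‖v‖ ^ (p - 2) : ℝ) : ℂ) * v)
        = ((‖v‖ ^ (p - 2) : ℝ) : ℂ) * ((starRingEnd ℂ) v * v) := by ring
      _ = ((‖v‖ ^ (p - 2) * ‖v‖ ^ (2:ℝ) : ℝ) : ℂ) := by
          rw [h1]; push_cast; ring
      _ = ((‖v‖ ^ p : ℝ) : ℂ) := by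
          rw [← Real.rpow_add hv]; norm_num

/-- Every eigenvalue of the matrix `p`-Laplacian eigenvalue problem
`Mᴴ(|Mz|^{p−2} ∘ Mz) = λ (|z|^{p−2} ∘ z)` is real, nonnegative, and equals the
`p`-norm quotient `‖Mz‖ₚᵖ / ‖z‖ₚᵖ` at its eigenvector. -/
theorem pLaplacian_eigenvalue {n : ℕ} (M : Matrix (Fin n) (Fin n) ℂ)
    (p : ℝ) (hp : 1 < p) (z : Fin n → ℂ) (hz : z ≠ 0) (lam : ℂ)
    (heig : Mᴴ.mulVec (fun i => phi p (M.mulVec z i)) = lam • fun i => phi p (z i)) :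
    lam.im = 0 ∧ 0 ≤ lam.re ∧
      lam = (((∑ i, ‖M.mulVec z i‖ ^ p) / (∑ i, ‖z i‖ ^ p) : ℝ) : ℂ) := by
  set S : ℝ := ∑ i, ‖M.mulVec z i‖ ^ p with hS
  set T : ℝ := ∑ i, ‖z i‖ ^ p with hT
  have hSnn : 0 ≤ S := Finset.sum_nonneg fun i _ => Real.rpow_nonneg (norm_nonneg _) _
  have hTpos : 0 < T := by
    obtain ⟨i, hi⟩ := Function.ne_iff.mp hz
    refine Finset.sum_pos' (fun j _ => Real.rpow_nonneg (norm_nonneg _) _) ⟨i, Finset.mem_univ i, ?_⟩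
    exact Real.rpow_pos_of_pos (norm_pos_iff.mpr hi) p
  have key : star z ⬝ᵥ Mᴴ.mulVec (fun i => phi p (M.mulVec z i))
      = star z ⬝ᵥ (lam • fun i => phi p (z i)) := by rw [heig]
  have hL : star z ⬝ᵥ Mᴴ.mulVec (fun i => phi p (M.mulVec z i)) = ((S : ℝ) : ℂ) := by
    rw [Matrix.dotProduct_mulVec, ← Matrix.star_mulVec]
    simp only [dotProduct, Pi.star_apply, Complex.star_def]
    rw [hS]
    push_cast
    exact Finset.sum_congr rfl fun j _ => conj_mul_phi p hp _
  have hR : star z ⬝ᵥ (lam • fun i => phi p (z i)) = lam * ((T : ℝ) : ℂ) := by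
    have : star z ⬝ᵥ (fun i => phi p (z i)) = ((T : ℝ) : ℂ) := by
      simp only [dotProduct, Pi.star_apply, Complex.star_def]
      rw [hT]
      push_cast
      exact Finset.sum_congr rfl fun j _ => conj_mul_phi p hp _
    rw [dotProduct_smul, smul_eq_mul, this]
  have heq : lam * ((T : ℝ) : ℂ) = ((S : ℝ) : ℂ) := by rw [← hR, ← key, hL]
  have hTne : ((T : ℝ) : ℂ) ≠ 0 := by
    exact_mod_cast ne_of_gt hTpos
  have hlam : lam = ((S / T : ℝ) : ℂ) := by
    field_simp at heq ⊢
    rw [Complex.ofReal_div, eq_div_iff hTne]; exact heq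
  refine ⟨?_, ?_, hlam⟩
  · rw [hlam]; simp
  · rw [hlam]; simp
    positivity
end

section
/- Let M be an n×n complex matrix with n ≥ 1 and let p be real with 1 < p. Define A(z) = Mᴴ·w with wᵢ = |(M·z)ᵢ|^{p−2}·(M·z)ᵢ and B(z)ᵢ = |zᵢ|^{p−2}·zᵢ (convention 0^{p−2}·0 = 0), and for z ≠ 0 let Q(z) = (Σᵢ |(M·z)ᵢ|^p)/(Σᵢ |zᵢ|^p). Let λ* = sup { Q(z) : z ≠ 0 }. Then λ* is finite and is an eigenvalue of the problem A(z) = λB(z), i.e. there exists z ≠ 0 with A(z) = λ*·B(z); moreover every eigenvalue λ of the problem satisfies λ = Q(z) for its eigenvector z, and hence every eigenvalue is a real number ≤ λ*. -/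
open Matrix BigOperators

/-- The nonlinear map `z ↦ Mᴴ(|Mz|^{p−2} ∘ Mz)`. -/
noncomputable def Amap {n : ℕ} (M : Matrix (Fin n) (Fin n) ℂ) (p : ℝ)
    (z : Fin n → ℂ) : Fin n → ℂ :=
  Mᴴ.mulVec fun i => phi p (M.mulVec z i)

/-- The nonlinear map `z ↦ |z|^{p−2} ∘ z`. -/
noncomputable def Bmap {n : ℕ} (p : ℝ) (z : Fin n → ℂ) : Fin n → ℂ :=
  fun i => phi p (z i)

/-- The `p`-norm quotient `Q(z) = ‖Mz‖ₚᵖ / ‖z‖ₚᵖ`. -/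
noncomputable def Qquot {n : ℕ} (M : Matrix (Fin n) (Fin n) ℂ) (p : ℝ)
    (z : Fin n → ℂ) : ℝ :=
  (∑ i, ‖M.mulVec z i‖ ^ p) / (∑ i, ‖z i‖ ^ p)

open Complex

noncomputable def Lphi (p : ℝ) (w : ℂ) : ℂ →L[ℝ] ℝ :=
  p • (Complex.reCLM.comp ((ContinuousLinearMap.mul ℝ ℂ) ((starRingEnd ℂ) (phi p w))))

lemma Lphi_apply (p : ℝ) (w v : ℂ) : Lphi p w v = p * ((starRingEnd ℂ) (phi p w) * v).re := rfl

lemma phi_zero (p : ℝ) : phi p 0 = 0 := by simp [phi]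

lemma abs_phi (p : ℝ) (hp : 1 < p) (v : ℂ) :
    ‖phi p v‖ = ‖v‖ ^ (p - 1) := by
  rcases eq_or_ne v 0 with rfl | hv
  · simp [phi, Real.zero_rpow (by linarith : p - 1 ≠ 0)]
  · have h : (0:ℝ) < ‖v‖ := norm_pos_iff.mpr hv
    simp only [phi, norm_mul, Complex.norm_real, Real.norm_eq_abs]
    rw [_root_.abs_of_nonneg (Real.rpow_nonneg h.le _), ← Real.rpow_add_one h.ne']
    ring_nf

lemma continuous_phi (p : ℝ) (hp : 1 < p) : Continuous (phi p) := by
  rw [continuous_iff_continuousAt]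
  intro v
  rcases eq_or_ne v 0 with rfl | hv
  · rw [ContinuousAt, phi_zero]
    rw [tendsto_zero_iff_norm_tendsto_zero]
    have h1 : Filter.Tendsto (fun w : ℂ => ‖w‖ ^ (p - 1)) (nhds 0) (nhds 0) := by
      have : Filter.Tendsto (fun x : ℝ => x ^ (p - 1)) (nhds 0) (nhds 0) := by
        have := (Real.continuousAt_rpow_const 0 (p-1) (Or.inr (by linarith))).tendsto
        simpa [Real.zero_rpow (by linarith : p - 1 ≠ 0)] using this
      exact this.comp (by simpa using (continuous_norm (E := ℂ)).tendsto 0)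
    refine h1.congr (fun w => ?_)
    rw [← abs_phi p hp w]
  · have h : ContinuousAt (fun v : ℂ => ((‖v‖ ^ (p - 2) : ℝ) : ℂ)) v := by
      refine Complex.continuous_ofReal.continuousAt.comp ?_
      exact (Real.continuousAt_rpow_const _ _ (Or.inl (norm_ne_zero_iff.mpr hv))).comp
        continuous_norm.continuousAt
    exact h.mul continuousAt_id

lemma hasFDerivAt_abs_rpow (p : ℝ) (hp : 1 < p) (w : ℂ) :
    HasFDerivAt (fun w : ℂ => ‖w‖ ^ p) (Lphi p w) w := by
  rcases eq_or_ne w 0 with rfl | hw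
  · have h0 : Lphi p 0 = 0 := by ext v; simp [Lphi_apply, phi]
    rw [h0, hasFDerivAt_iff_isLittleO_nhds_zero]
    simp only [zero_add, ContinuousLinearMap.zero_apply, sub_zero, map_zero]
    rw [Asymptotics.isLittleO_iff]
    intro c hc
    have h1 : Filter.Tendsto (fun h : ℂ => ‖h‖ ^ (p - 1)) (nhds 0) (nhds 0) := by
      have : Filter.Tendsto (fun x : ℝ => x ^ (p - 1)) (nhds 0) (nhds 0) := by
        have := (Real.continuousAt_rpow_const 0 (p-1) (Or.inr (by linarith))).tendsto
        simpa [Real.zero_rpow (by linarith : p - 1 ≠ 0)] using this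
      exact this.comp (by simpa using (continuous_norm (E := ℂ)).tendsto 0)
    filter_upwards [h1.eventually_le_const hc] with h hh
    rcases eq_or_ne h 0 with rfl | hh0
    · simp [Real.zero_rpow (by linarith : p ≠ 0)]
    · have hpos : (0:ℝ) < ‖h‖ := norm_pos_iff.mpr hh0
      have : ‖h‖ ^ p = ‖h‖ ^ (p - 1) * ‖h‖ := by
        rw [← Real.rpow_add_one hpos.ne']; ring_nf
      rw [Real.norm_eq_abs, norm_zero, Real.zero_rpow (by linarith : p ≠ 0), sub_zero,
        _root_.abs_of_nonneg (Real.rpow_nonneg (norm_nonneg h) p), this]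
      exact mul_le_mul_of_nonneg_right hh hpos.le
  · have hn : 0 < Complex.normSq w := Complex.normSq_pos.2 hw
    have hre : HasFDerivAt (fun z : ℂ => z.re) Complex.reCLM w := Complex.reCLM.hasFDerivAt
    have him : HasFDerivAt (fun z : ℂ => z.im) Complex.imCLM w := Complex.imCLM.hasFDerivAt
    have hN : HasFDerivAt (fun z : ℂ => Complex.normSq z)
        (w.re • Complex.reCLM + w.re • Complex.reCLM + (w.im • Complex.imCLM + w.im • Complex.imCLM)) w := by
      have h2 := (hre.mul hre).add (him.mul him)
      have hf : (fun z : ℂ => Complex.normSq z) =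
          ((fun z : ℂ => z.re) * fun z => z.re) + (fun z : ℂ => z.im) * fun z => z.im := by
        funext z; simp [Complex.normSq_apply]
      rw [hf]; exact h2
    have houter : HasDerivAt (fun x : ℝ => x ^ (p/2)) ((p/2) * Complex.normSq w ^ (p/2 - 1))
        (Complex.normSq w) := Real.hasDerivAt_rpow_const (Or.inl hn.ne')
    have hcomp := houter.comp_hasFDerivAt w hN
    have hfun : (fun z : ℂ => ‖z‖ ^ p) = fun z : ℂ => Complex.normSq z ^ (p/2) := by
      funext z
      rw [Complex.norm_def, Real.sqrt_eq_rpow,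
        ← Real.rpow_mul (Complex.normSq_nonneg z)]
      congr 1; ring
    have hkey : Complex.normSq w ^ (p/2 - 1) = ‖w‖ ^ (p - 2) := by
      rw [Complex.norm_def, Real.sqrt_eq_rpow,
        ← Real.rpow_mul (Complex.normSq_nonneg w)]
      congr 1; ring
    rw [hfun]
    refine hcomp.congr_fderiv ?_
    ext v
    simp only [Lphi_apply, phi, _root_.map_mul, Complex.conj_ofReal,
      ContinuousLinearMap.smul_apply, ContinuousLinearMap.add_apply,
      ContinuousLinearMap.coe_smul', Pi.smul_apply, Complex.reCLM_apply,
      Complex.imCLM_apply, smul_eq_mul, Complex.mul_re, Complex.mul_im, Complex.ofReal_re, Complex.ofReal_im,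
      Complex.conj_re, Complex.conj_im]
    rw [hkey]
    ring

lemma continuous_Lphi (p : ℝ) (hp : 1 < p) : Continuous (fun w : ℂ => Lphi p w) := by
  have h1 : Continuous (fun w : ℂ => (ContinuousLinearMap.mul ℝ ℂ) ((starRingEnd ℂ) (phi p w))) :=
    (ContinuousLinearMap.mul ℝ ℂ).continuous.comp
      (Complex.continuous_conj.comp (continuous_phi p hp))
  have h2 : Continuous (fun w : ℂ =>
      Complex.reCLM.comp ((ContinuousLinearMap.mul ℝ ℂ) ((starRingEnd ℂ) (phi p w)))) :=
    ((ContinuousLinearMap.compL ℝ ℂ ℂ ℝ) Complex.reCLM).continuous.comp h1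
  exact h2.const_smul p

lemma hasStrictFDerivAt_abs_rpow (p : ℝ) (hp : 1 < p) (w : ℂ) :
    HasStrictFDerivAt (fun w : ℂ => ‖w‖ ^ p) (Lphi p w) w := by
  have hC : ContDiff ℝ 1 (fun w : ℂ => ‖w‖ ^ p) := by
    rw [contDiff_one_iff_fderiv]
    have hf : (fderiv ℝ fun w : ℂ => ‖w‖ ^ p) = fun w => Lphi p w :=
      funext fun w => (hasFDerivAt_abs_rpow p hp w).fderiv
    exact ⟨fun w => (hasFDerivAt_abs_rpow p hp w).differentiableAt,
      hf ▸ continuous_Lphi p hp⟩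
  have := (hC.contDiffAt (x := w)).hasStrictFDerivAt one_ne_zero
  rwa [(hasFDerivAt_abs_rpow p hp w).fderiv] at this

lemma conj_phi_mul_self (p : ℝ) (hp : 1 < p) (w : ℂ) :
    (starRingEnd ℂ) (phi p w) * w = ((‖w‖ ^ p : ℝ) : ℂ) := by
  rcases eq_or_ne w 0 with rfl | hw
  · simp [phi, Real.zero_rpow (by linarith : p ≠ 0)]
  · have h : (0:ℝ) < ‖w‖ := norm_pos_iff.mpr hw
    simp only [phi, _root_.map_mul, Complex.conj_ofReal, mul_assoc]
    rw [Complex.conj_mul', ← Complex.ofReal_pow, ← Complex.ofReal_mul]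
    congr 1
    rw [← Real.rpow_natCast (‖w‖) 2, ← Real.rpow_add h]
    norm_num

section multi
variable {n : ℕ} (p : ℝ)

noncomputable def Gfun (z : Fin n → ℂ) : ℝ := ∑ i, ‖z i‖ ^ p

noncomputable def DG (z : Fin n → ℂ) : (Fin n → ℂ) →L[ℝ] ℝ :=
  ∑ i, (Lphi p (z i)).comp (ContinuousLinearMap.proj i)

lemma DG_apply (z v : Fin n → ℂ) :
    DG p z v = p * (∑ i, (starRingEnd ℂ) (phi p (z i)) * v i).re := by
  simp only [DG, ContinuousLinearMap.sum_apply, ContinuousLinearMap.comp_apply,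
    ContinuousLinearMap.proj_apply, Lphi_apply, Complex.re_sum, Finset.mul_sum]

lemma hasStrictFDerivAt_G (hp : 1 < p) (z : Fin n → ℂ) :
    HasStrictFDerivAt (Gfun p) (DG p z) z := by
  apply HasStrictFDerivAt.fun_sum
  intro i _
  have hproj : HasStrictFDerivAt (fun y : Fin n → ℂ => y i)
      (ContinuousLinearMap.proj i : (Fin n → ℂ) →L[ℝ] ℂ) z :=
    ContinuousLinearMap.hasStrictFDerivAt
      (ContinuousLinearMap.proj (R := ℝ) (φ := fun _ : Fin n => ℂ) i)
  exact (hasStrictFDerivAt_abs_rpow p hp (z i)).comp z hproj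

lemma DG_self (hp : 1 < p) (z : Fin n → ℂ) : DG p z z = p * Gfun p z := by
  rw [DG_apply]
  congr 1
  have : ∀ i, (starRingEnd ℂ) (phi p (z i)) * z i = ((‖z i‖ ^ p : ℝ) : ℂ) :=
    fun i => conj_phi_mul_self p hp (z i)
  simp only [this]
  rw [← Complex.ofReal_sum]
  simp [Gfun]

lemma adjoint_sum (M : Matrix (Fin n) (Fin n) ℂ) (z v : Fin n → ℂ) :
    ∑ i, (starRingEnd ℂ) (phi p (M.mulVec z i)) * M.mulVec v i
      = ∑ j, (starRingEnd ℂ) (Amap M p z j) * v j := by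
  simp only [Amap, Matrix.mulVec, dotProduct, Matrix.conjTranspose_apply,
    map_sum, _root_.map_mul, Complex.conj_conj, Finset.mul_sum, Finset.sum_mul]
  rw [Finset.sum_comm]
  refine Finset.sum_congr rfl fun i _ => Finset.sum_congr rfl fun j _ => ?_
  simp only [RCLike.star_def, Complex.conj_conj]
  ring

lemma sep_lemma (u w : Fin n → ℂ)
    (h : ∀ v : Fin n → ℂ, (∑ i, (starRingEnd ℂ) (u i) * v i).re
       = (∑ i, (starRingEnd ℂ) (w i) * v i).re) : u = w := by
  funext j
  set d : Fin n → ℂ := Pi.single j (u j - w j) with hd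
  have h1 := h d
  have h2 : ∀ (a : Fin n → ℂ), ∑ i, (starRingEnd ℂ) (a i) * d i
      = (starRingEnd ℂ) (a j) * (u j - w j) := by
    intro a
    rw [Finset.sum_eq_single (M := ℂ) j]
    · simp [hd]
    · intro b _ hb; simp [hd, Pi.single_eq_of_ne hb]
    · simp
  rw [h2 u, h2 w] at h1
  have h3 : (((starRingEnd ℂ) (u j) - (starRingEnd ℂ) (w j)) * (u j - w j)).re = 0 := by
    rw [sub_mul]; simp [Complex.sub_re, h1]
  rw [← map_sub, Complex.conj_mul', ← Complex.ofReal_pow,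
    Complex.ofReal_re] at h3
  have h4 : ‖u j - w j‖ = 0 := by
    nlinarith [norm_nonneg (u j - w j)]
  exact sub_eq_zero.mp (norm_eq_zero.mp h4)
end multi

section eig
variable {n : ℕ} {p : ℝ}

lemma Gfun_pos (hp : 1 < p) {z : Fin n → ℂ} (hz : z ≠ 0) : 0 < Gfun p z := by
  obtain ⟨j, hj⟩ := Function.ne_iff.mp hz
  exact Finset.sum_pos' (fun i _ => Real.rpow_nonneg (norm_nonneg _) p)
    ⟨j, Finset.mem_univ j, Real.rpow_pos_of_pos (norm_pos_iff.mpr hj) p⟩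

lemma continuous_Gfun (hp : 1 < p) : Continuous (Gfun (n := n) p) := by
  apply continuous_finset_sum
  intro i _
  have habs : Continuous (fun w : ℂ => ‖w‖ ^ p) := by
    rw [continuous_iff_continuousAt]
    exact fun w => (hasFDerivAt_abs_rpow p hp w).continuousAt
  exact habs.comp (continuous_apply i)

lemma eig_val (hp : 1 < p) (M : Matrix (Fin n) (Fin n) ℂ)
    (z : Fin n → ℂ) (hz : z ≠ 0) (lam : ℂ)
    (h : Amap M p z = lam • fun i => phi p (z i)) :
    lam = ((((∑ i, ‖M.mulVec z i‖ ^ p) / (∑ i, ‖z i‖ ^ p)) : ℝ) : ℂ) := by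
  have hpair := adjoint_sum p M z z
  have hL : ∑ i, (starRingEnd ℂ) (phi p (M.mulVec z i)) * M.mulVec z i
      = ((∑ i, ‖M.mulVec z i‖ ^ p : ℝ) : ℂ) := by
    push_cast
    exact Finset.sum_congr rfl fun i _ => conj_phi_mul_self p hp _
  have hR : ∑ j, (starRingEnd ℂ) (Amap M p z j) * z j
      = (starRingEnd ℂ) lam * ((∑ i, ‖z i‖ ^ p : ℝ) : ℂ) := by
    rw [h]
    push_cast
    rw [Finset.mul_sum]
    refine Finset.sum_congr rfl fun j _ => ?_
    simp only [Pi.smul_apply, smul_eq_mul, _root_.map_mul]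
    rw [mul_assoc, conj_phi_mul_self p hp]
  rw [hL, hR] at hpair
  have hG : (0:ℝ) < ∑ i, ‖z i‖ ^ p := Gfun_pos hp hz
  have hconj : (starRingEnd ℂ) lam
      = ((((∑ i, ‖M.mulVec z i‖ ^ p) / (∑ i, ‖z i‖ ^ p)) : ℝ) : ℂ) := by
    rw [Complex.ofReal_div, eq_div_iff (by exact_mod_cast hG.ne')]
    exact hpair.symm
  calc lam = (starRingEnd ℂ) ((starRingEnd ℂ) lam) := (Complex.conj_conj lam).symm
    _ = _ := by rw [hconj, Complex.conj_ofReal]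

end eig



/-- The supremum `λ* = sup {Q(z) : z ≠ 0}` of the `p`-norm quotients is finite,
is attained as an eigenvalue of the matrix `p`-Laplacian problem, and every
eigenvalue equals `Q` at its eigenvector, hence is real and at most `λ*`. -/
theorem pLaplacian_largest_eigenvalue {n : ℕ} (hn : 1 ≤ n)
    (M : Matrix (Fin n) (Fin n) ℂ) (p : ℝ) (hp : 1 < p) :
    BddAbove {q : ℝ | ∃ z : Fin n → ℂ, z ≠ 0 ∧ q = Qquot M p z} ∧
    (∃ z : Fin n → ℂ, z ≠ 0 ∧
      Amap M p z =
        ((sSup {q : ℝ | ∃ z : Fin n → ℂ, z ≠ 0 ∧ q = Qquot M p z} : ℝ) : ℂ) • Bmap p z) ∧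
    (∀ z : Fin n → ℂ, z ≠ 0 → ∀ lam : ℂ, Amap M p z = lam • Bmap p z →
      lam = ((Qquot M p z : ℝ) : ℂ) ∧
        Qquot M p z ≤ sSup {q : ℝ | ∃ z : Fin n → ℂ, z ≠ 0 ∧ q = Qquot M p z}) := by
  classical
  set SS : Set ℝ := {q : ℝ | ∃ z : Fin n → ℂ, z ≠ 0 ∧ q = Qquot M p z} with hSS
  set sph : Set (Fin n → ℂ) := {z | Gfun p z = 1} with hsph
  let T : (Fin n → ℂ) →L[ℝ] (Fin n → ℂ) :=
    LinearMap.toContinuousLinearMap ((Matrix.mulVecLin M).restrictScalars ℝ)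
  have hT : ∀ v, T v = M.mulVec v := fun v => rfl
  have hFcont : Continuous (fun z : Fin n → ℂ => Gfun p (M.mulVec z)) :=
    (continuous_Gfun hp).comp T.continuous
  have hclosed : IsClosed sph := isClosed_eq (continuous_Gfun hp) continuous_const
  have hsub : sph ⊆ Metric.closedBall 0 1 := by
    intro z hz
    rw [Metric.mem_closedBall, dist_zero_right,
      pi_norm_le_iff_of_nonneg zero_le_one]
    intro i
    by_contra hgt
    push_neg at hgt
    have h1 : (1:ℝ) < ‖z i‖ ^ p :=
      (Real.one_lt_rpow_iff_of_pos (by linarith)).mpr (Or.inl ⟨hgt, by linarith⟩)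
    have h2 : ‖z i‖ ^ p ≤ Gfun p z :=
      Finset.single_le_sum (fun i _ => Real.rpow_nonneg (norm_nonneg _) p)
        (Finset.mem_univ i)
    have h3 : Gfun p z = 1 := hz
    linarith
  have hcpt : IsCompact sph :=
    (isCompact_closedBall (0 : Fin n → ℂ) 1).of_isClosed_subset hclosed hsub
  have hone : Gfun p (Pi.single (⟨0, hn⟩ : Fin n) (1:ℂ)) = 1 := by
    rw [Gfun, Finset.sum_eq_single (⟨0, hn⟩ : Fin n)]
    · simp [Real.one_rpow]
    · intro b _ hb; simp [Pi.single_eq_of_ne hb, Real.zero_rpow (by linarith : p ≠ 0)]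
    · simp
  obtain ⟨z₀, hz₀S, hmax⟩ := hcpt.exists_isMaxOn ⟨_, hone⟩ hFcont.continuousOn
  have hz₀mem : Gfun p z₀ = 1 := hz₀S
  have hz₀ : z₀ ≠ 0 := by
    intro h
    have h0 : Gfun p (0 : Fin n → ℂ) = 0 := by
      simp [Gfun, Real.zero_rpow (by linarith : p ≠ 0)]
    rw [h, h0] at hz₀mem
    norm_num at hz₀mem
  have hGs := hasStrictFDerivAt_G p hp z₀
  have hFs : HasStrictFDerivAt (fun z => Gfun p (M.mulVec z))
      ((DG p (M.mulVec z₀)).comp T) z₀ := by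
    have h := (hasStrictFDerivAt_G p hp (T z₀)).comp z₀ T.hasStrictFDerivAt
    exact h
  have hextr : IsLocalExtrOn (fun z => Gfun p (M.mulVec z)) {x | Gfun p x = Gfun p z₀} z₀ := by
    have hseteq : {x | Gfun p x = Gfun p z₀} = sph := by rw [hz₀mem]
    rw [hseteq]
    exact Or.inr hmax.localize
  obtain ⟨a, b, hab, heq⟩ := hextr.exists_multipliers_of_hasStrictFDerivAt_1d hGs hFs
  have heval : ∀ v, a * DG p z₀ v + b * DG p (M.mulVec z₀) (T v) = 0 := by
    intro v
    have h := ContinuousLinearMap.ext_iff.mp heq v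
    simpa using h
  have hb : b ≠ 0 := by
    intro hb0
    have ha : a ≠ 0 := by
      rintro ha0
      exact hab (by simp [ha0, hb0, Prod.ext_iff])
    have h1 := heval z₀
    rw [hb0, zero_mul, add_zero] at h1
    have h2 : DG p z₀ z₀ = 0 := by
      rcases mul_eq_zero.mp h1 with h | h
      · exact absurd h ha
      · exact h
    rw [DG_self p hp, hz₀mem, mul_one] at h2
    linarith
  set lam : ℝ := -a / b with hlam
  have hDF : ∀ v, DG p (M.mulVec z₀) (T v) = lam * DG p z₀ v := by
    intro v
    have h1 := heval v
    rw [hlam]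
    field_simp
    linarith [h1]
  have hAB : Amap M p z₀ = ((lam : ℝ) : ℂ) • Bmap p z₀ := by
    apply sep_lemma
    intro v
    have h1 := hDF v
    rw [hT, DG_apply, DG_apply, adjoint_sum] at h1
    have hp0 : p ≠ 0 := by linarith
    have h2 : (∑ j, (starRingEnd ℂ) (Amap M p z₀ j) * v j).re
        = lam * (∑ i, (starRingEnd ℂ) (phi p (z₀ i)) * v i).re := by
      have h1' : p * (∑ j, (starRingEnd ℂ) (Amap M p z₀ j) * v j).re
          = p * (lam * (∑ i, (starRingEnd ℂ) (phi p (z₀ i)) * v i).re) := by linarith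
      exact mul_left_cancel₀ hp0 h1'
    have h3 : ∑ i, (starRingEnd ℂ) ((((lam:ℝ):ℂ) • Bmap p z₀) i) * v i
        = ((lam:ℝ):ℂ) * ∑ i, (starRingEnd ℂ) (phi p (z₀ i)) * v i := by
      rw [Finset.mul_sum]
      refine Finset.sum_congr rfl fun i _ => ?_
      simp only [Bmap, Pi.smul_apply, smul_eq_mul, _root_.map_mul, Complex.conj_ofReal]
      ring
    show (∑ j, (starRingEnd ℂ) (Amap M p z₀ j) * v j).re = _
    rw [show Amap M p z₀ = Amap M p z₀ from rfl, h2, h3, Complex.re_ofReal_mul]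
  have hlam_eq := eig_val hp M z₀ hz₀ ((lam:ℝ):ℂ) hAB
  have hQz₀ : Qquot M p z₀ = Gfun p (M.mulVec z₀) := by
    rw [Qquot, show (∑ i, ‖z₀ i‖ ^ p) = 1 from hz₀mem, div_one]
    rfl
  have hub : ∀ q ∈ SS, q ≤ Gfun p (M.mulVec z₀) := by
    rintro q ⟨z, hz, rfl⟩
    have hGz : 0 < Gfun p z := Gfun_pos hp hz
    set t : ℝ := (Gfun p z) ^ (-(1/p)) with ht
    have htpos : 0 < t := Real.rpow_pos_of_pos hGz _
    have htp : t ^ p = (Gfun p z)⁻¹ := by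
      rw [ht, ← Real.rpow_mul hGz.le, show (-(1/p))*p = -1 by field_simp,
        Real.rpow_neg_one]
    have hsmul : ∀ (w : Fin n → ℂ), Gfun p ((t:ℂ) • w) = t ^ p * Gfun p w := by
      intro w
      rw [Gfun, Gfun, Finset.mul_sum]
      refine Finset.sum_congr rfl fun i _ => ?_
      simp only [Pi.smul_apply, smul_eq_mul, norm_mul, Complex.norm_real, Real.norm_eq_abs,
        _root_.abs_of_nonneg htpos.le]
      exact Real.mul_rpow htpos.le (norm_nonneg _)
    have hmem : (t:ℂ) • z ∈ sph := by
      show Gfun p ((t:ℂ) • z) = 1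
      rw [hsmul, htp, inv_mul_cancel₀ hGz.ne']
    have hle := hmax hmem
    have hmv : M.mulVec ((t:ℂ) • z) = (t:ℂ) • M.mulVec z := M.mulVec_smul _ _
    have hQ : Qquot M p z = Gfun p (M.mulVec ((t:ℂ) • z)) := by
      rw [hmv, hsmul, htp, Qquot, div_eq_inv_mul]
      rfl
    rw [hQ]
    exact hle
  have hbdd : BddAbove SS := ⟨_, fun q hq => hub q hq⟩
  have hmemQ : Qquot M p z₀ ∈ SS := ⟨z₀, hz₀, rfl⟩
  have hsup : sSup SS = Qquot M p z₀ := by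
    apply le_antisymm
    · apply csSup_le ⟨_, hmemQ⟩
      intro q hq
      rw [hQz₀]
      exact hub q hq
    · exact le_csSup hbdd hmemQ
  refine ⟨hbdd, ⟨z₀, hz₀, ?_⟩, ?_⟩
  · rw [hsup]
    have hcast : ((lam:ℝ):ℂ) = ((Qquot M p z₀ : ℝ) : ℂ) := by
      rw [hlam_eq]; rfl
    rw [← hcast]
    exact hAB
  · intro z hz lam' hEq
    exact ⟨eig_val hp M z hz lam' hEq, le_csSup hbdd ⟨z, hz, rfl⟩⟩
end

section
/- Let A₀, A₁, A₂ be n×n complex matrices and form the 2n×2n block matrices M = [[A₀, A₁],[0, I]], N = [[0, −A₂],[I, 0]], and P = [[I, 0],[0, −A₀ᴴ·A₂]]. Assume −A₀ᴴ·A₂ is positive definite. Then the P-weighted pairing (Mz, Nz)_P = (N·z)* · P · (M·z) is real for every z ∈ ℂ^{2n} if and only if A₂ᴴ·A₁ is a Hermitian matrix. -/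
open Matrix
open scoped ComplexOrder

lemma herm_iff_aux {n : ℕ} (B : Matrix (Fin n) (Fin n) ℂ) :
    B.IsHermitian ↔ ∀ y : Fin n → ℂ, (star y ⬝ᵥ B.mulVec y).im = 0 := by
  rw [Matrix.isHermitian_iff_isSymmetric, LinearMap.isSymmetric_iff_inner_map_self_real,
    (WithLp.equiv 2 (Fin n → ℂ)).symm.surjective.forall]
  simp only [WithLp.equiv_symm_apply, Matrix.toEuclideanLin_toLp, EuclideanSpace.inner_toLp_toLp,
    Matrix.toLin'_apply, Complex.conj_eq_iff_im, dotProduct_comm _ (star _)]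
  have e : ∀ y : Fin n → ℂ, (star (B *ᵥ y) ⬝ᵥ y).im = -(star y ⬝ᵥ B *ᵥ y).im := by
    intro y; rw [Matrix.star_dotProduct]; simp
  constructor
  · intro h y; have := h y; rw [e y, neg_eq_zero] at this; exact this
  · intro h y; rw [e y, neg_eq_zero]; exact h y

lemma star_sum_elim_aux {n : ℕ} (a b : Fin n → ℂ) :
    star (Sum.elim a b) = Sum.elim (star a) (star b) := by
  funext i; cases i <;> simp [Pi.star_apply]

lemma pairing_eq_aux {n : ℕ} (A₀ A₁ A₂ : Matrix (Fin n) (Fin n) ℂ) (x y : Fin n → ℂ) :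
    (star ((Matrix.fromBlocks 0 (-A₂) 1 0).mulVec (Sum.elim x y)) ⬝ᵥ
        (Matrix.fromBlocks 1 0 0 (-(A₀ᴴ * A₂))).mulVec
          ((Matrix.fromBlocks A₀ A₁ 0 1).mulVec (Sum.elim x y)))
    = -((star (A₂ *ᵥ y) ⬝ᵥ (A₀ *ᵥ x)) + star ((star (A₂ *ᵥ y) ⬝ᵥ (A₀ *ᵥ x))))
      - star y ⬝ᵥ ((A₂ᴴ * A₁) *ᵥ y) := by
  have hc : star ((star y ᵥ* (A₂ᴴ * A₀)) ⬝ᵥ x) = (star x ᵥ* (A₀ᴴ * A₂)) ⬝ᵥ y := by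
    rw [← Matrix.dotProduct_mulVec, ← Matrix.star_dotProduct, Matrix.star_mulVec,
      Matrix.conjTranspose_mul, Matrix.conjTranspose_conjTranspose]
  simp only [Matrix.fromBlocks_mulVec, Matrix.zero_mulVec, Matrix.one_mulVec, zero_add, add_zero,
    Sum.elim_comp_inl, Sum.elim_comp_inr, star_neg, star_sum_elim_aux, Matrix.neg_mulVec,
    sumElim_dotProduct_sumElim, dotProduct_add, dotProduct_neg,
    neg_dotProduct, Matrix.mulVec_mulVec, Matrix.star_mulVec, Matrix.dotProduct_mulVec,
    Matrix.vecMul_vecMul, Matrix.neg_vecMul, hc]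
  ring

lemma pairing_im_aux {n : ℕ} (A₀ A₁ A₂ : Matrix (Fin n) (Fin n) ℂ) (x y : Fin n → ℂ) :
    (star ((Matrix.fromBlocks 0 (-A₂) 1 0).mulVec (Sum.elim x y)) ⬝ᵥ
        (Matrix.fromBlocks 1 0 0 (-(A₀ᴴ * A₂))).mulVec
          ((Matrix.fromBlocks A₀ A₁ 0 1).mulVec (Sum.elim x y))).im
    = -(star y ⬝ᵥ ((A₂ᴴ * A₁) *ᵥ y)).im := by
  rw [pairing_eq_aux]; simp

/-- For the linearization `M = [[A₀, A₁],[0, I]]`, `N = [[0, −A₂],[I, 0]]` of the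
quadratic pencil `λ²A₂ + λA₁ + A₀`, with `P = [[I, 0],[0, −A₀ᴴA₂]]` positive
definite, the weighted pairing `(Mz, Nz)_P = (Nz)* P (Mz)` is real for all `z`
iff `A₂ᴴA₁` is Hermitian. -/
theorem pencil_pairing_real_iff {n : ℕ} (A₀ A₁ A₂ : Matrix (Fin n) (Fin n) ℂ)
    (hP : (-(A₀ᴴ * A₂)).PosDef) :
    (∀ z : Fin n ⊕ Fin n → ℂ,
      (star ((Matrix.fromBlocks 0 (-A₂) 1 0).mulVec z) ⬝ᵥ
        (Matrix.fromBlocks 1 0 0 (-(A₀ᴴ * A₂))).mulVec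
          ((Matrix.fromBlocks A₀ A₁ 0 1).mulVec z)).im = 0) ↔
    (A₂ᴴ * A₁).IsHermitian := by
  constructor
  · intro h
    rw [herm_iff_aux]
    intro y
    have := h (Sum.elim 0 y)
    rw [pairing_im_aux, neg_eq_zero] at this
    exact this
  · intro h z
    have hy := (herm_iff_aux _).mp h
    rw [← Sum.elim_comp_inl_inr z, pairing_im_aux, hy, neg_zero]
end
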